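/- In an innerproduct hyperspace V, any orthogonal set of non-zero vectors is weak linearly independent: for any finite orthogonal set {α₁, ..., αₙ} of non-zero vectors, if 0 * P = λ₁ * α₁ # λ₂ * α₂ # ... # λₙ * αₙ for some subset P ⊆ V and scalars λ₁, ..., λₙ ∈ ℝ, then λ₁ = λ₂ = ... = λₙ = 0. -/

import Mathlib

/-- Hyperaddition of two sets: `A # B = ⋃_{a∈A, b∈B} a # b`. -/
def hSum {V : Type*} (hadd : V → V → Set V) (A B : Set V) : Set V :=
  ⋃ a ∈ A, ⋃ b ∈ B, hadd a b

/-- A commutative hypergroup. -/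
structure CommHypergroup (V : Type*) where
  hadd : V → V → Set V
  hadd_nonempty : ∀ a b, (hadd a b).Nonempty
  hadd_comm : ∀ a b, hadd a b = hadd b a
  hadd_assoc : ∀ a b c, hSum hadd {a} (hadd b c) = hSum hadd (hadd a b) {c}
  zero : V
  neg : V → V
  neg_spec : ∀ a, zero ∈ hadd a (neg a) ∧ zero ∈ hadd (neg a) a
  neg_unique : ∀ a b, zero ∈ hadd a b → zero ∈ hadd b a → b = neg a
  mem_shift : ∀ a b c, a ∈ hadd b c → b ∈ hadd a (neg c)

/-- A hyperfield: hyperaddition, ordinary multiplication. -/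
structure Hyperfield (F : Type*) extends CommHypergroup F where
  mul : F → F → F
  mul_assoc' : ∀ a b c, mul (mul a b) c = mul a (mul b c)
  mul_comm' : ∀ a b, mul a b = mul b a
  distrib : ∀ a b c, (mul a) '' (hadd b c) = hadd (mul a b) (mul a c)
  mul_zero' : ∀ a, mul a zero = zero
  one : F
  mul_one' : ∀ a, mul a one = a
  mul_inv' : ∀ a, a ≠ zero → ∃ b, mul a b = one

/-- A hypervector space over a hyperfield `K`. -/
structure HypVecSp (F : Type*) (K : Hyperfield F) (V : Type*) extends CommHypergroup V where
  smul : F → V → Set V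
  smul_nonempty : ∀ a α, (smul a α).Nonempty
  smul_hadd : ∀ a α β, (⋃ x ∈ hadd α β, smul a x) ⊆ hSum hadd (smul a α) (smul a β)
  hadd_smul : ∀ a b α, (⋃ c ∈ K.hadd a b, smul c α) ⊆ hSum hadd (smul a α) (smul b α)
  mul_smul' : ∀ a b α, smul (K.mul a b) α = ⋃ x ∈ smul b α, smul a x
  neg_smul' : ∀ a α, smul (K.neg a) α = smul a (neg α)
  one_smul' : ∀ α, α ∈ smul K.one α
  zero_smul' : ∀ α, zero ∈ smul K.zero α
  zero_smul_zero : smul K.zero zero = {zero}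

/-- The hyper-linear combination `λ₁*α₁ # λ₂*α₂ # ⋯ # λₙ*αₙ` of a list of
scalar/vector pairs (the empty combination is `{θ}`, which is neutral for `#`). -/
def combo {F V : Type*} (hadd : V → V → Set V) (smul : F → V → Set V) (z : V) :
    List (F × V) → Set V
  | [] => {z}
  | p :: l => hSum hadd (smul p.1 p.2) (combo hadd smul z l)

/-- The span of a set `A`: all vectors lying in some finite hyper-linear
combination of elements of `A`. -/
def hspan {F V : Type*} (hadd : V → V → Set V) (smul : F → V → Set V) (z : V)
    (A : Set V) : Set V :=
  {x | ∃ l : List (F × V), l ≠ [] ∧ (∀ p ∈ l, p.2 ∈ A) ∧ x ∈ combo hadd smul z l}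

/-- The real hyperfield: a hyperfield structure on `ℝ` whose multiplication,
zero and one are the usual ones. -/
structure RealHyperfield extends Hyperfield ℝ where
  zero_eq : zero = 0
  one_eq : one = 1
  mul_eq : ∀ a b, mul a b = a * b

/-- An innerproduct hyperspace over the real hyperfield. -/
structure InnerHyp (K : RealHyperfield) (V : Type*) extends
    HypVecSp ℝ K.toHyperfield V where
  inner : V → V → ℝ
  inner_pos : ∀ α, α ≠ zero → 0 < inner α α
  inner_self_eq_zero : ∀ α, inner α α = 0 ↔ α = zero
  inner_symm : ∀ α β, inner α β = inner β α
  sup_hadd : ∀ α β γ, IsLUB ((fun x => inner x γ) '' hadd α β) (inner α γ + inner β γ)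
  sup_smul : ∀ a α β, IsLUB ((fun x => inner x β) '' smul a α) (a * inner α β)

lemma hSum_isLUB {V : Type*} (hadd : V → V → Set V) (f : V → ℝ)
    (hf : ∀ a b, IsLUB (f '' hadd a b) (f a + f b))
    (A B : Set V) (a b : ℝ) (hA : IsLUB (f '' A) a) (hB : IsLUB (f '' B) b) :
    IsLUB (f '' hSum hadd A B) (a + b) := by
  constructor
  · rintro y ⟨x, hx, rfl⟩
    simp only [hSum, Set.mem_iUnion] at hx
    obtain ⟨a', ha', b', hb', hx⟩ := hx
    have h1 := (hf a' b').1 ⟨x, hx, rfl⟩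
    have h2 := hA.1 ⟨a', ha', rfl⟩
    have h3 := hB.1 ⟨b', hb', rfl⟩
    linarith
  · intro u hu
    have key : ∀ b' ∈ B, f b' ≤ u - a := by
      intro b' hb'
      have ha' : a ≤ u - f b' := by
        apply hA.2
        rintro y ⟨a', ha', rfl⟩
        have hub : f a' + f b' ≤ u := by
          apply (hf a' b').2
          rintro z ⟨x, hx, rfl⟩
          refine hu ⟨x, ?_, rfl⟩
          simp only [hSum, Set.mem_iUnion]
          exact ⟨a', ha', b', hb', hx⟩
        linarith
      linarith
    have hb' : b ≤ u - a := by
      apply hB.2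
      rintro y ⟨b', hb', rfl⟩
      exact key b' hb'
    linarith

lemma combo_isLUB {F V : Type*} (hadd : V → V → Set V) (smul : F → V → Set V) (z : V)
    (f : V → ℝ) (hz : f z = 0)
    (hf : ∀ a b, IsLUB (f '' hadd a b) (f a + f b))
    (g : F × V → ℝ)
    (hg : ∀ p : F × V, IsLUB (f '' smul p.1 p.2) (g p)) :
    ∀ L : List (F × V), IsLUB (f '' combo hadd smul z L) ((L.map g).sum) := by
  intro L
  induction L with
  | nil =>
      have : (f '' combo hadd smul z []) = {f z} := by simp [combo]
      rw [this, List.map_nil, List.sum_nil, ← hz]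
      exact isLUB_singleton
  | cons p L ih =>
      have := hSum_isLUB hadd f hf (smul p.1 p.2) (combo hadd smul z L)
        (g p) ((L.map g).sum) (hg p) ih
      simpa [combo] using this

lemma innerHyp_zero_left {K : RealHyperfield} {V : Type*} (W : InnerHyp K V) (β : V) :
    W.inner W.zero β = 0 := by
  have h1 : W.smul 0 W.zero = {W.zero} := by
    have := W.zero_smul_zero
    rwa [K.zero_eq] at this
  have h2 := W.sup_smul 0 W.zero β
  rw [h1] at h2
  have h3 : IsLUB {W.inner W.zero β} (W.inner W.zero β) :=
    isLUB_singleton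
  have : ((fun x => W.inner x β) '' {W.zero}) = {W.inner W.zero β} := by
    simp
  rw [this] at h2
  have := h3.unique h2
  simpa using this

/-- Any finite orthogonal set of non-zero vectors is weak linearly independent:
if `0 * P = λ₁*α₁ # ⋯ # λₙ*αₙ` for some nonempty `P ⊆ V`, then all `λᵢ = 0`. -/
theorem orthogonal_weak_lin_indep {K : RealHyperfield} {V : Type*} (W : InnerHyp K V)
    {n : ℕ} (α : Fin n → V)
    (hne : ∀ i, α i ≠ W.zero)
    (horth : ∀ i j, i ≠ j → W.inner (α i) (α j) = 0)
    (P : Set V) (hP : P.Nonempty) (l : Fin n → ℝ)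
    (h : (⋃ p ∈ P, W.smul 0 p)
        = combo W.hadd W.smul W.zero (List.ofFn fun i => (l i, α i))) :
    ∀ i, l i = 0 := by
  intro i
  set f : V → ℝ := fun x => W.inner x (α i) with hf_def
  have hf : ∀ a b, IsLUB (f '' W.hadd a b) (f a + f b) := fun a b => W.sup_hadd a b (α i)
  have hz : f W.zero = 0 := innerHyp_zero_left W (α i)
  have hg : ∀ p : ℝ × V, IsLUB (f '' W.smul p.1 p.2) (p.1 * W.inner p.2 (α i)) :=
    fun p => W.sup_smul p.1 p.2 (α i)
  -- LUB of RHS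
  have hR := combo_isLUB W.hadd W.smul W.zero f hz hf _ hg
    (List.ofFn fun j => (l j, α j))
  have hsum : ((List.ofFn fun j => (l j, α j)).map
      (fun p : ℝ × V => p.1 * W.inner p.2 (α i))).sum = l i * W.inner (α i) (α i) := by
    rw [List.map_ofFn, List.sum_ofFn]
    rw [Finset.sum_eq_single i]
    · rfl
    · intro j _ hji
      simp [Function.comp, horth j i hji]
    · simp
  rw [hsum] at hR
  -- LUB of LHS
  have hL : IsLUB (f '' ⋃ p ∈ P, W.smul 0 p) 0 := by
    constructor
    · rintro y ⟨x, hx, rfl⟩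
      simp only [Set.mem_iUnion] at hx
      obtain ⟨p, hp, hx⟩ := hx
      have := (W.sup_smul 0 p (α i)).1 ⟨x, hx, rfl⟩
      simpa using this
    · intro u hu
      obtain ⟨p, hp⟩ := hP
      have h0 : IsLUB (f '' W.smul 0 p) (0 * W.inner p (α i)) := W.sup_smul 0 p (α i)
      have : 0 * W.inner p (α i) ≤ u := by
        apply h0.2
        rintro y ⟨x, hx, rfl⟩
        exact hu ⟨x, Set.mem_iUnion.2 ⟨p, Set.mem_iUnion.2 ⟨hp, hx⟩⟩, rfl⟩
      simpa using this
  rw [h] at hL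
  have := hL.unique hR
  have hpos := W.inner_pos (α i) (hne i)
  rcases mul_eq_zero.1 this.symm with h' | h'
  · exact h'
  · exact absurd h' (ne_of_gt hpos)
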